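/- Let B be a bialgebra and L: B⊗B → ℂ a normalized commuting 2-cocycle (generator of an additive deformation). Defining μ_t = μ⋆e_⋆^{tL} for all real t, the comultiplication Δ: (B, μ_{t+s}) → (B, μ_t)⊗(B, μ_s) is an algebra homomorphism: Δ∘μ_{t+s} = (μ_t⊗μ_s)∘(id⊗τ⊗id)∘(Δ⊗Δ) for all s,t ∈ ℝ. -/

import Mathlib

open TensorProduct Coalgebra

variable {B : Type} [Ring B] [Bialgebra ℂ B]

/-- The comultiplication `Λ = (id ⊗ τ ⊗ id) ∘ (Δ ⊗ Δ)` of `B ⊗ B`. -/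
noncomputable def Lam : B ⊗[ℂ] B →ₗ[ℂ] (B ⊗[ℂ] B) ⊗[ℂ] (B ⊗[ℂ] B) :=
  (TensorProduct.tensorTensorTensorComm ℂ B B B B).toLinearMap ∘ₗ
    TensorProduct.map (comul (R := ℂ)) (comul (R := ℂ))

/-- Convolution of linear functionals w.r.t. a given comultiplication. -/
noncomputable def convWith {M : Type} [AddCommGroup M] [Module ℂ M]
    (Δ : M →ₗ[ℂ] M ⊗[ℂ] M) (φ ψ : M →ₗ[ℂ] ℂ) : M →ₗ[ℂ] ℂ :=
  LinearMap.mul' ℂ ℂ ∘ₗ TensorProduct.map φ ψ ∘ₗ Δ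

/-- Convolution powers `φ^{⋆n}` w.r.t. a comultiplication `Δ` and counit `ε`. -/
noncomputable def convPowWith {M : Type} [AddCommGroup M] [Module ℂ M]
    (Δ : M →ₗ[ℂ] M ⊗[ℂ] M) (ε : M →ₗ[ℂ] ℂ) (φ : M →ₗ[ℂ] ℂ) : ℕ → (M →ₗ[ℂ] ℂ)
  | 0 => ε
  | n + 1 => convWith Δ φ (convPowWith Δ ε φ n)

/-- The counit `δ ⊗ δ` of `B ⊗ B`. -/
noncomputable def counit2 : B ⊗[ℂ] B →ₗ[ℂ] ℂ :=
  LinearMap.mul' ℂ ℂ ∘ₗ TensorProduct.map (counit (R := ℂ)) (counit (R := ℂ))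

/-- `L ⋆ μ = (L ⊗ μ) ∘ Λ : B ⊗ B → B`. -/
noncomputable def LconvMu (L : B ⊗[ℂ] B →ₗ[ℂ] ℂ) : B ⊗[ℂ] B →ₗ[ℂ] B :=
  (TensorProduct.lid ℂ B).toLinearMap ∘ₗ TensorProduct.map L (LinearMap.mul' ℂ B) ∘ₗ Lam

/-- `μ ⋆ L = (μ ⊗ L) ∘ Λ : B ⊗ B → B`. -/
noncomputable def MuConvL (L : B ⊗[ℂ] B →ₗ[ℂ] ℂ) : B ⊗[ℂ] B →ₗ[ℂ] B :=
  (TensorProduct.rid ℂ B).toLinearMap ∘ₗ TensorProduct.map (LinearMap.mul' ℂ B) L ∘ₗ Lam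

/-! ### Auxiliary convolution machinery -/

section Conv
variable {A : Type} [AddCommGroup A] [Module ℂ A] [Coalgebra ℂ A]
variable {T : Type} [Ring T] [Algebra ℂ T]

/-- Convolution of linear maps from a coalgebra to an algebra. -/
noncomputable def cv (f g : A →ₗ[ℂ] T) : A →ₗ[ℂ] T :=
  LinearMap.mul' ℂ T ∘ₗ TensorProduct.map f g ∘ₗ comul

lemma cv_repr (f g : A →ₗ[ℂ] T) {x : A} {ι : Type*} (r : Coalgebra.Repr ℂ x ι) :
    cv f g x = ∑ i ∈ r.index, f (r.left i) * g (r.right i) := by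
  simp only [cv, LinearMap.comp_apply, ← r.eq, map_sum, TensorProduct.map_tmul,
    LinearMap.mul'_apply]

lemma sum_counit_smul_right {x : A} {ι : Type*} (r : Coalgebra.Repr ℂ x ι) :
    ∑ i ∈ r.index, counit (R := ℂ) (r.left i) • r.right i = x := by
  have h := Coalgebra.sum_counit_tmul_eq (R := ℂ) r
  have := congrArg (TensorProduct.lid ℂ A) h
  simpa [map_sum, -Coalgebra.sum_counit_tmul_eq] using this

lemma sum_counit_smul_left {x : A} {ι : Type*} (r : Coalgebra.Repr ℂ x ι) :
    ∑ i ∈ r.index, counit (R := ℂ) (r.right i) • r.left i = x := by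
  have h := Coalgebra.sum_tmul_counit_eq (R := ℂ) r
  have := congrArg (TensorProduct.rid ℂ A) h
  simpa [map_sum, -Coalgebra.sum_tmul_counit_eq] using this

lemma cv_counit_left (f : A →ₗ[ℂ] T) :
    cv ((Algebra.linearMap ℂ T) ∘ₗ counit) f = f := by
  ext x
  rw [cv_repr _ _ (ℛ ℂ x)]
  simp only [LinearMap.comp_apply]
  have : ∀ i ∈ (ℛ ℂ x).index,
      (Algebra.linearMap ℂ T) (counit (R := ℂ) ((ℛ ℂ x).left i)) * f ((ℛ ℂ x).right i)
        = f (counit (R := ℂ) ((ℛ ℂ x).left i) • (ℛ ℂ x).right i) := by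
    intro i _
    rw [map_smul, Algebra.linearMap_apply, ← Algebra.smul_def]
  rw [Finset.sum_congr rfl this, ← map_sum, sum_counit_smul_right]

lemma cv_counit_right (f : A →ₗ[ℂ] T) :
    cv f ((Algebra.linearMap ℂ T) ∘ₗ counit) = f := by
  ext x
  rw [cv_repr _ _ (ℛ ℂ x)]
  simp only [LinearMap.comp_apply]
  have : ∀ i ∈ (ℛ ℂ x).index,
      f ((ℛ ℂ x).left i) * (Algebra.linearMap ℂ T) (counit (R := ℂ) ((ℛ ℂ x).right i))
        = f (counit (R := ℂ) ((ℛ ℂ x).right i) • (ℛ ℂ x).left i) := by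
    intro i _
    rw [map_smul, Algebra.linearMap_apply, ← Algebra.commutes, ← Algebra.smul_def]
  rw [Finset.sum_congr rfl this, ← map_sum, sum_counit_smul_left]

lemma cv_assoc (f g h : A →ₗ[ℂ] T) : cv (cv f g) h = cv f (cv g h) := by
  ext x
  set r := ℛ ℂ x
  set a₁ : (i : A × A) → Coalgebra.Repr ℂ (r.left i) (A × A) := fun i => ℛ ℂ (r.left i)
  set a₂ : (i : A × A) → Coalgebra.Repr ℂ (r.right i) (A × A) := fun i => ℛ ℂ (r.right i)
  have key := Coalgebra.sum_tmul_tmul_eq (R := ℂ) r a₁ a₂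
  set T3 : A ⊗[ℂ] (A ⊗[ℂ] A) →ₗ[ℂ] T :=
    LinearMap.mul' ℂ T ∘ₗ TensorProduct.map f (LinearMap.mul' ℂ T ∘ₗ TensorProduct.map g h)
  have key2 := congrArg T3 key
  simp only [map_sum, T3, LinearMap.comp_apply, TensorProduct.map_tmul,
    LinearMap.mul'_apply] at key2
  calc cv (cv f g) h x = ∑ i ∈ r.index, cv f g (r.left i) * h (r.right i) := cv_repr _ _ r
    _ = ∑ i ∈ r.index, ∑ j ∈ (a₁ i).index,
        f ((a₁ i).left j) * (g ((a₁ i).right j) * h (r.right i)) := by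
        refine Finset.sum_congr rfl fun i _ => ?_
        rw [cv_repr _ _ (a₁ i), Finset.sum_mul]
        exact Finset.sum_congr rfl fun j _ => mul_assoc _ _ _
    _ = ∑ i ∈ r.index, ∑ j ∈ (a₂ i).index,
        f (r.left i) * (g ((a₂ i).left j) * h ((a₂ i).right j)) := key2
    _ = cv f (cv g h) x := by
        rw [cv_repr _ _ r]
        refine Finset.sum_congr rfl fun i _ => ?_
        rw [cv_repr _ _ (a₂ i), Finset.mul_sum]

variable {T' : Type} [Ring T'] [Algebra ℂ T']

lemma alghom_cv (h : T →ₐ[ℂ] T') (f g : A →ₗ[ℂ] T) :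
    h.toLinearMap ∘ₗ cv f g = cv (h.toLinearMap ∘ₗ f) (h.toLinearMap ∘ₗ g) := by
  refine LinearMap.ext fun x => ?_
  rw [LinearMap.comp_apply, cv_repr f g (ℛ ℂ x), cv_repr _ _ (ℛ ℂ x), map_sum]
  exact Finset.sum_congr rfl fun i _ => by simp

lemma cv_scalar_right (f : A →ₗ[ℂ] T) (φ : A →ₗ[ℂ] ℂ) :
    (TensorProduct.rid ℂ T).toLinearMap ∘ₗ TensorProduct.map f φ ∘ₗ comul
      = cv f ((Algebra.linearMap ℂ T) ∘ₗ φ) := by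
  refine LinearMap.ext fun x => ?_
  rw [LinearMap.comp_apply, LinearMap.comp_apply, cv_repr _ _ (ℛ ℂ x), ← (ℛ ℂ x).eq,
    map_sum, map_sum]
  refine Finset.sum_congr rfl fun i _ => ?_
  rw [TensorProduct.map_tmul, LinearEquiv.coe_coe, TensorProduct.rid_tmul,
    LinearMap.comp_apply, Algebra.linearMap_apply, ← Algebra.commutes, ← Algebra.smul_def]

lemma cv_scalar_left (f : A →ₗ[ℂ] T) (φ : A →ₗ[ℂ] ℂ) :
    (TensorProduct.lid ℂ T).toLinearMap ∘ₗ TensorProduct.map φ f ∘ₗ comul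
      = cv ((Algebra.linearMap ℂ T) ∘ₗ φ) f := by
  refine LinearMap.ext fun x => ?_
  rw [LinearMap.comp_apply, LinearMap.comp_apply, cv_repr _ _ (ℛ ℂ x), ← (ℛ ℂ x).eq,
    map_sum, map_sum]
  refine Finset.sum_congr rfl fun i _ => ?_
  rw [TensorProduct.map_tmul, LinearEquiv.coe_coe, TensorProduct.lid_tmul,
    LinearMap.comp_apply, Algebra.linearMap_apply, ← Algebra.smul_def]

lemma cv_mid_comm (f g h k : A →ₗ[ℂ] T) (hgh : cv g h = cv h g) :
    cv (cv f g) (cv h k) = cv (cv f h) (cv g k) := by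
  rw [cv_assoc, cv_assoc, ← cv_assoc g, ← cv_assoc h, hgh]

end Conv

/-! ### Extraction operators and the fundamental theorem of coalgebras -/

section Ext
variable {N M : Type} [AddCommGroup N] [Module ℂ N] [AddCommGroup M] [Module ℂ M]

noncomputable def lext (φ : N →ₗ[ℂ] ℂ) : N ⊗[ℂ] M →ₗ[ℂ] M :=
  (TensorProduct.lid ℂ M).toLinearMap ∘ₗ φ.rTensor M

noncomputable def rext (ψ : N →ₗ[ℂ] ℂ) : M ⊗[ℂ] N →ₗ[ℂ] M :=
  (TensorProduct.rid ℂ M).toLinearMap ∘ₗ ψ.lTensor M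

@[simp] lemma lext_tmul (φ : N →ₗ[ℂ] ℂ) (a : N) (m : M) :
    lext φ (a ⊗ₜ[ℂ] m) = φ a • m := by simp [lext]

@[simp] lemma rext_tmul (ψ : N →ₗ[ℂ] ℂ) (m : M) (a : N) :
    rext ψ (m ⊗ₜ[ℂ] a) = ψ a • m := by simp [rext]

lemma sum_delta {n : ℕ} (i : Fin n) (q : Fin n → ℂ)
    (hq : ∀ i', q i' = if i' = i then 1 else 0) (t : Fin n → M) :
    ∑ i', q i' • t i' = t i := by
  rw [Finset.sum_congr rfl (fun i' _ => by rw [hq i'])]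
  simp [ite_smul]

end Ext

section FTCsec
variable {A : Type} [AddCommGroup A] [Module ℂ A] [Coalgebra ℂ A]

omit [Coalgebra ℂ A] in
lemma lext_assoc (φ : A →ₗ[ℂ] ℂ) (t : A ⊗[ℂ] A) (a : A) :
    lext φ ((TensorProduct.assoc ℂ A A A) (t ⊗ₜ[ℂ] a)) = (lext φ t) ⊗ₜ[ℂ] a := by
  induction t using TensorProduct.induction_on with
  | zero => simp [zero_tmul]
  | tmul p q => simp [smul_tmul']
  | add t₁ t₂ h₁ h₂ => simp only [add_tmul, map_add, h₁, h₂]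

omit [Coalgebra ℂ A] in
lemma rext_assoc_symm (ψ : A →ₗ[ℂ] ℂ) (a : A) (t : A ⊗[ℂ] A) :
    rext ψ ((TensorProduct.assoc ℂ A A A).symm (a ⊗ₜ[ℂ] t)) = a ⊗ₜ[ℂ] (rext ψ t) := by
  induction t using TensorProduct.induction_on with
  | zero => simp [tmul_zero]
  | tmul p q => simp [tmul_smul]
  | add t₁ t₂ h₁ h₂ => simp only [tmul_add, map_add, h₁, h₂]

/-- The fundamental theorem of coalgebras, in coordinates: every element lies in the
span of a finite family which has finite "structure constants" for the comultiplication. -/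
theorem exists_struct (x : A) :
    ∃ (n : ℕ) (v : Fin n → A) (d : Fin n → Fin n → Fin n → ℂ),
      x ∈ Submodule.span ℂ (Set.range v) ∧
      ∀ i, comul (R := ℂ) (v i) = ∑ j, ∑ k, d i j k • (v j ⊗ₜ[ℂ] v k) := by
  classical
  obtain ⟨S, hS⟩ := TensorProduct.exists_finset (R := ℂ) (comul (R := ℂ) x)
  set W₁ : Submodule ℂ A := Submodule.span ℂ ((S.image Prod.fst : Finset A) : Set A) with hW₁
  set W₂ : Submodule ℂ A := Submodule.span ℂ ((S.image Prod.snd : Finset A) : Set A) with hW₂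
  haveI : FiniteDimensional ℂ W₁ := FiniteDimensional.span_finset ℂ _
  haveI : FiniteDimensional ℂ W₂ := FiniteDimensional.span_finset ℂ _
  have hy : ∃ Y : W₁ ⊗[ℂ] W₂,
      TensorProduct.map W₁.subtype W₂.subtype Y = comul (R := ℂ) x := by
    refine ⟨∑ p ∈ S.attach,
      (⟨p.1.1, Submodule.subset_span (by simp [Finset.mem_image]; exact ⟨p.1.2, p.2⟩)⟩ : W₁)
        ⊗ₜ[ℂ]
      (⟨p.1.2, Submodule.subset_span (by simp [Finset.mem_image]; exact ⟨p.1.1, p.2⟩)⟩ : W₂), ?_⟩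
    rw [map_sum, hS, ← Finset.sum_attach S (fun p => p.1 ⊗ₜ[ℂ] p.2)]
    simp
  obtain ⟨Y, hY⟩ := hy
  set bE := Module.finBasis ℂ W₁
  set bF := Module.finBasis ℂ W₂
  set m := Module.finrank ℂ W₁
  set p := Module.finrank ℂ W₂
  set e : Fin m → A := fun i => (bE i : A) with he
  set f : Fin p → A := fun j => (bF j : A) with hf
  set g : Fin m → Fin p → ℂ := fun i j => (bE.tensorProduct bF).repr Y (i, j) with hg
  have hyef : comul (R := ℂ) x = ∑ i, ∑ j, g i j • (e i ⊗ₜ[ℂ] f j) := by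
    rw [← hY, ← Module.Basis.sum_repr (bE.tensorProduct bF) Y, map_sum, Fintype.sum_prod_type]
    refine Finset.sum_congr rfl fun i _ => Finset.sum_congr rfl fun j _ => ?_
    rw [map_smul, Module.Basis.tensorProduct_apply, TensorProduct.map_tmul]
    rfl
  set u : Fin m → A := fun i => ∑ j, g i j • f j with hu
  set w : Fin p → A := fun j => ∑ i, g i j • e i with hw
  have h_yu : comul (R := ℂ) x = ∑ i, e i ⊗ₜ[ℂ] u i := by
    rw [hyef]
    refine Finset.sum_congr rfl fun i _ => ?_
    rw [hu, tmul_sum]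
    exact Finset.sum_congr rfl fun j _ => by rw [tmul_smul]
  have h_yw : comul (R := ℂ) x = ∑ j, w j ⊗ₜ[ℂ] f j := by
    rw [hyef, Finset.sum_comm]
    refine Finset.sum_congr rfl fun j _ => ?_
    rw [hw, sum_tmul]
    exact Finset.sum_congr rfl fun i _ => by rw [smul_tmul']
  obtain ⟨W₁', hW₁c⟩ := Submodule.exists_isCompl W₁
  obtain ⟨W₂', hW₂c⟩ := Submodule.exists_isCompl W₂
  set φ : Fin m → (A →ₗ[ℂ] ℂ) :=
    fun i => (bE.coord i) ∘ₗ (W₁.projectionOnto W₁' hW₁c) with hφdef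
  set ψ : Fin p → (A →ₗ[ℂ] ℂ) :=
    fun j => (bF.coord j) ∘ₗ (W₂.projectionOnto W₂' hW₂c) with hψdef
  have hφ : ∀ i i', φ i (e i') = if i' = i then 1 else 0 := by
    intro i i'
    have : W₁.projectionOnto W₁' hW₁c (e i') = bE i' :=
      Submodule.projectionOnto_apply_left hW₁c (bE i')
    simp [hφdef, this, Module.Basis.coord_apply, Module.Basis.repr_self, Finsupp.single_apply]
  have hψ : ∀ j j', ψ j (f j') = if j' = j then 1 else 0 := by
    intro j j'
    have : W₂.projectionOnto W₂' hW₂c (f j') = bF j' :=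
      Submodule.projectionOnto_apply_left hW₂c (bF j')
    simp [hψdef, this, Module.Basis.coord_apply, Module.Basis.repr_self, Finsupp.single_apply]
  set c : Fin m → Fin p → A := fun i j => lext (φ i) (comul (R := ℂ) (w j)) with hc
  have hC1 : ∀ i, comul (R := ℂ) (u i) = ∑ j, c i j ⊗ₜ[ℂ] f j := by
    intro i
    have co := Coalgebra.coassoc_apply (R := ℂ) x
    have hl : (comul (R := ℂ)).rTensor A (comul (R := ℂ) x)
        = ∑ j, comul (R := ℂ) (w j) ⊗ₜ[ℂ] f j := by
      rw [h_yw, map_sum]; exact Finset.sum_congr rfl fun j _ => rfl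
    have hr : (comul (R := ℂ)).lTensor A (comul (R := ℂ) x)
        = ∑ i', e i' ⊗ₜ[ℂ] comul (R := ℂ) (u i') := by
      rw [h_yu, map_sum]; exact Finset.sum_congr rfl fun i' _ => rfl
    have := congrArg (lext (φ i)) co
    rw [hl, hr] at this
    simp only [map_sum] at this
    calc comul (R := ℂ) (u i)
        = ∑ i', φ i (e i') • comul (R := ℂ) (u i') :=
          (sum_delta i (fun i' => φ i (e i')) (hφ i) (fun i' => comul (R := ℂ) (u i'))).symm
      _ = ∑ i', lext (φ i) (e i' ⊗ₜ[ℂ] comul (R := ℂ) (u i')) := by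
          exact Finset.sum_congr rfl fun i' _ => (lext_tmul _ _ _).symm
      _ = ∑ j, lext (φ i) ((TensorProduct.assoc ℂ A A A) (comul (R := ℂ) (w j) ⊗ₜ[ℂ] f j)) :=
          this.symm
      _ = ∑ j, c i j ⊗ₜ[ℂ] f j := by
          exact Finset.sum_congr rfl fun j _ => by rw [lext_assoc]
  have hC2 : ∀ j, comul (R := ℂ) (w j) = ∑ i, e i ⊗ₜ[ℂ] c i j := by
    intro j
    have co := Coalgebra.coassoc_symm_apply (R := ℂ) x
    have hl : (comul (R := ℂ)).lTensor A (comul (R := ℂ) x)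
        = ∑ i, e i ⊗ₜ[ℂ] comul (R := ℂ) (u i) := by
      rw [h_yu, map_sum]; exact Finset.sum_congr rfl fun i _ => rfl
    have hr : (comul (R := ℂ)).rTensor A (comul (R := ℂ) x)
        = ∑ j', comul (R := ℂ) (w j') ⊗ₜ[ℂ] f j' := by
      rw [h_yw, map_sum]; exact Finset.sum_congr rfl fun j' _ => rfl
    have := congrArg (rext (ψ j)) co
    rw [hl, hr] at this
    simp only [map_sum] at this
    calc comul (R := ℂ) (w j)
        = ∑ j', ψ j (f j') • comul (R := ℂ) (w j') :=
          (sum_delta j (fun j' => ψ j (f j')) (hψ j) (fun j' => comul (R := ℂ) (w j'))).symm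
      _ = ∑ j', rext (ψ j) (comul (R := ℂ) (w j') ⊗ₜ[ℂ] f j') := by
          exact Finset.sum_congr rfl fun j' _ => (rext_tmul _ _ _).symm
      _ = ∑ i, rext (ψ j) ((TensorProduct.assoc ℂ A A A).symm (e i ⊗ₜ[ℂ] comul (R := ℂ) (u i))) :=
          this.symm
      _ = ∑ i, e i ⊗ₜ[ℂ] c i j := by
          refine Finset.sum_congr rfl fun i _ => ?_
          rw [rext_assoc_symm]
          congr 1
          rw [hC1 i, map_sum]
          simp only [rext_tmul]
          exact sum_delta j (fun j' => ψ j (f j')) (hψ j) (fun j' => c i j')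
  have hC3a : ∀ i j, comul (R := ℂ) (c i j)
      = ∑ j', c i j' ⊗ₜ[ℂ] (rext (ψ j) (comul (R := ℂ) (f j'))) := by
    intro i j
    have co := Coalgebra.coassoc_symm_apply (R := ℂ) (u i)
    have hl : (comul (R := ℂ)).lTensor A (comul (R := ℂ) (u i))
        = ∑ j', c i j' ⊗ₜ[ℂ] comul (R := ℂ) (f j') := by
      rw [hC1 i, map_sum]; exact Finset.sum_congr rfl fun j' _ => rfl
    have hr : (comul (R := ℂ)).rTensor A (comul (R := ℂ) (u i))
        = ∑ j', comul (R := ℂ) (c i j') ⊗ₜ[ℂ] f j' := by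
      rw [hC1 i, map_sum]; exact Finset.sum_congr rfl fun j' _ => rfl
    have := congrArg (rext (ψ j)) co
    rw [hl, hr] at this
    simp only [map_sum] at this
    calc comul (R := ℂ) (c i j)
        = ∑ j', ψ j (f j') • comul (R := ℂ) (c i j') :=
          (sum_delta j (fun j' => ψ j (f j')) (hψ j) (fun j' => comul (R := ℂ) (c i j'))).symm
      _ = ∑ j', rext (ψ j) (comul (R := ℂ) (c i j') ⊗ₜ[ℂ] f j') := by
          exact Finset.sum_congr rfl fun j' _ => (rext_tmul _ _ _).symm
      _ = ∑ j', rext (ψ j) ((TensorProduct.assoc ℂ A A A).symm (c i j' ⊗ₜ[ℂ] comul (R := ℂ) (f j'))) :=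
          this.symm
      _ = ∑ j', c i j' ⊗ₜ[ℂ] (rext (ψ j) (comul (R := ℂ) (f j'))) := by
          exact Finset.sum_congr rfl fun j' _ => by rw [rext_assoc_symm]
  have hC3b : ∀ i j, comul (R := ℂ) (c i j)
      = ∑ i', (lext (φ i) (comul (R := ℂ) (e i'))) ⊗ₜ[ℂ] c i' j := by
    intro i j
    have co := Coalgebra.coassoc_apply (R := ℂ) (w j)
    have hl : (comul (R := ℂ)).rTensor A (comul (R := ℂ) (w j))
        = ∑ i', comul (R := ℂ) (e i') ⊗ₜ[ℂ] c i' j := by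
      rw [hC2 j, map_sum]; exact Finset.sum_congr rfl fun i' _ => rfl
    have hr : (comul (R := ℂ)).lTensor A (comul (R := ℂ) (w j))
        = ∑ i', e i' ⊗ₜ[ℂ] comul (R := ℂ) (c i' j) := by
      rw [hC2 j, map_sum]; exact Finset.sum_congr rfl fun i' _ => rfl
    have := congrArg (lext (φ i)) co
    rw [hl, hr] at this
    simp only [map_sum] at this
    calc comul (R := ℂ) (c i j)
        = ∑ i', φ i (e i') • comul (R := ℂ) (c i' j) :=
          (sum_delta i (fun i' => φ i (e i')) (hφ i) (fun i' => comul (R := ℂ) (c i' j))).symm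
      _ = ∑ i', lext (φ i) (e i' ⊗ₜ[ℂ] comul (R := ℂ) (c i' j)) := by
          exact Finset.sum_congr rfl fun i' _ => (lext_tmul _ _ _).symm
      _ = ∑ i', lext (φ i) ((TensorProduct.assoc ℂ A A A) (comul (R := ℂ) (e i') ⊗ₜ[ℂ] c i' j)) :=
          this.symm
      _ = ∑ i', (lext (φ i) (comul (R := ℂ) (e i'))) ⊗ₜ[ℂ] c i' j := by
          exact Finset.sum_congr rfl fun i' _ => by rw [lext_assoc]
  set V : Submodule ℂ A :=
    Submodule.span ℂ (Set.range fun q : Fin m × Fin p => c q.1 q.2) with hV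
  haveI : FiniteDimensional ℂ V :=
    FiniteDimensional.span_of_finite ℂ (Set.finite_range _)
  have hcV : ∀ i j, c i j ∈ V :=
    fun i j => Submodule.subset_span ⟨(i, j), rfl⟩
  obtain ⟨V', hVc⟩ := Submodule.exists_isCompl V
  set π : A →ₗ[ℂ] A := V.subtype ∘ₗ (V.projectionOnto V' hVc) with hπdef
  have hπ : ∀ a ∈ V, π a = a := by
    intro a ha
    have := Submodule.projectionOnto_apply_left hVc ⟨a, ha⟩
    simp only [hπdef, LinearMap.comp_apply, Submodule.subtype_apply]
    rw [show a = ((⟨a, ha⟩ : V) : A) from rfl, this]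
  have hπV : ∀ a, π a ∈ V := fun a => (V.projectionOnto V' hVc a).2
  have hVV : ∀ i j, comul (R := ℂ) (c i j)
      ∈ LinearMap.range (TensorProduct.map V.subtype V.subtype) := by
    intro i j
    have h1 : (TensorProduct.map π LinearMap.id) (comul (R := ℂ) (c i j))
        = comul (R := ℂ) (c i j) := by
      conv_lhs => rw [hC3a i j]
      rw [map_sum]
      conv_rhs => rw [hC3a i j]
      refine Finset.sum_congr rfl fun j' _ => ?_
      rw [TensorProduct.map_tmul, hπ _ (hcV i j'), LinearMap.id_apply]
    rw [← h1, hC3b i j, map_sum]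
    refine Submodule.sum_mem _ fun i' _ => ?_
    rw [TensorProduct.map_tmul, LinearMap.id_apply]
    exact ⟨(⟨π (lext (φ i) (comul (R := ℂ) (e i'))), hπV _⟩ : V) ⊗ₜ[ℂ]
      (⟨c i' j, hcV i' j⟩ : V), rfl⟩
  have hw_c : ∀ j, w j = ∑ i, counit (R := ℂ) (e i) • c i j := by
    intro j
    have h := Coalgebra.rTensor_counit_comul (R := ℂ) (w j)
    rw [hC2 j, map_sum] at h
    have := congrArg (TensorProduct.lid ℂ A) h
    simpa [map_sum] using this.symm
  have hxw : x = ∑ j, counit (R := ℂ) (f j) • w j := by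
    have h := Coalgebra.lTensor_counit_comul (R := ℂ) x
    rw [h_yw, map_sum] at h
    have := congrArg (TensorProduct.rid ℂ A) h
    simpa [map_sum] using this.symm
  have hxV : x ∈ V := by
    rw [hxw]
    refine Submodule.sum_mem _ fun j _ => Submodule.smul_mem _ _ ?_
    rw [hw_c j]
    exact Submodule.sum_mem _ fun i _ => Submodule.smul_mem _ _ (hcV i j)
  have hall : ∀ a ∈ V, comul (R := ℂ) a
      ∈ LinearMap.range (TensorProduct.map V.subtype V.subtype) := by
    intro a ha
    induction ha using Submodule.span_induction with
    | mem a hmem => obtain ⟨⟨i, j⟩, rfl⟩ := hmem; exact hVV i j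
    | zero => rw [map_zero]; exact Submodule.zero_mem _
    | add a b _ _ ha hb => rw [map_add]; exact Submodule.add_mem _ ha hb
    | smul r a _ ha => rw [map_smul]; exact Submodule.smul_mem _ _ ha
  set n := Module.finrank ℂ V
  set bV := Module.finBasis ℂ V
  set v : Fin n → A := fun k => (bV k : A) with hvdef
  have hvV : ∀ k, v k ∈ V := fun k => (bV k).2
  have hspan : Submodule.span ℂ (Set.range v) = V := by
    have : Set.range v = V.subtype '' Set.range bV := by
      rw [← Set.range_comp]; rfl
    rw [this, ← Submodule.map_span, bV.span_eq, Submodule.map_top, Submodule.range_subtype]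
  have hall' : ∀ k : Fin n, ∃ Y : V ⊗[ℂ] V,
      TensorProduct.map V.subtype V.subtype Y = comul (R := ℂ) (v k) :=
    fun k => hall (v k) (hvV k)
  choose Yf hYf using hall'
  refine ⟨n, v, fun k j l => (bV.tensorProduct bV).repr (Yf k) (j, l), ?_, ?_⟩
  · rw [hspan]; exact hxV
  · intro k
    rw [← hYf k, ← Module.Basis.sum_repr (bV.tensorProduct bV) (Yf k), map_sum,
      Fintype.sum_prod_type]
    refine Finset.sum_congr rfl fun j _ => Finset.sum_congr rfl fun l _ => ?_
    rw [map_smul, Module.Basis.tensorProduct_apply, TensorProduct.map_tmul]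
    rfl

end FTCsec

/-! ### Convolution powers, their additivity and growth bound -/

section Pow
variable {A : Type} [AddCommGroup A] [Module ℂ A] [Coalgebra ℂ A]

noncomputable def cpow (L : A →ₗ[ℂ] ℂ) : ℕ → (A →ₗ[ℂ] ℂ)
  | 0 => counit
  | n + 1 => cv L (cpow L n)

lemma counit_linearMap_eq :
    (Algebra.linearMap ℂ ℂ) ∘ₗ (counit (R := ℂ) (A := A)) = counit (R := ℂ) (A := A) := by
  ext x; simp

lemma cpow_add (L : A →ₗ[ℂ] ℂ) (a b : ℕ) :
    cpow L (a + b) = cv (cpow L a) (cpow L b) := by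
  induction a with
  | zero =>
    rw [Nat.zero_add]
    show cpow L b = cv (cpow L 0) (cpow L b)
    rw [show cpow L 0 = counit (R := ℂ) (A := A) from rfl, ← counit_linearMap_eq,
      cv_counit_left]
  | succ a ih =>
    rw [Nat.succ_add]
    show cpow L (a + b + 1) = cv (cpow L (a + 1)) (cpow L b)
    rw [show cpow L (a + b + 1) = cv L (cpow L (a + b)) from rfl, ih,
      show cpow L (a + 1) = cv L (cpow L a) from rfl, cv_assoc]

theorem cpow_bound (L : A →ₗ[ℂ] ℂ) (x : A) :
    ∃ C M : ℝ, 0 ≤ C ∧ 0 ≤ M ∧ ∀ k : ℕ, ‖cpow L k x‖ ≤ C * M ^ k := by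
  obtain ⟨n, v, d, hx, hv⟩ := exists_struct x
  set K : ℝ := (∑ i, ‖counit (R := ℂ) (v i)‖) + 1 with hK
  set M : ℝ := (∑ i, ∑ j, ∑ k, ‖d i j k‖ * ‖L (v j)‖) + 1 with hM
  have hK0 : 0 < K := by positivity
  have hM0 : 0 < M := by positivity
  have key : ∀ (k : ℕ) (i : Fin n), ‖cpow L k (v i)‖ ≤ K * M ^ k := by
    intro k
    induction k with
    | zero =>
      intro i
      show ‖counit (R := ℂ) (v i)‖ ≤ K * M ^ 0
      rw [pow_zero, mul_one, hK]
      have : ‖counit (R := ℂ) (v i)‖ ≤ ∑ i', ‖counit (R := ℂ) (v i')‖ :=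
        Finset.single_le_sum (f := fun i' => ‖counit (R := ℂ) (v i')‖)
          (fun _ _ => norm_nonneg _) (Finset.mem_univ i)
      linarith
    | succ k ih =>
      intro i
      have hval : cpow L (k + 1) (v i) = ∑ j, ∑ l, d i j l • (L (v j) * cpow L k (v l)) := by
        show cv L (cpow L k) (v i) = _
        simp only [cv, LinearMap.comp_apply]
        rw [hv i, map_sum, map_sum]
        refine Finset.sum_congr rfl fun j _ => ?_
        rw [map_sum, map_sum]
        refine Finset.sum_congr rfl fun l _ => ?_
        rw [map_smul, map_smul, TensorProduct.map_tmul, LinearMap.mul'_apply]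
      rw [hval]
      calc ‖∑ j, ∑ l, d i j l • (L (v j) * cpow L k (v l))‖
          ≤ ∑ j, ∑ l, ‖d i j l • (L (v j) * cpow L k (v l))‖ := by
            refine (norm_sum_le _ _).trans (Finset.sum_le_sum fun j _ => norm_sum_le _ _)
        _ ≤ ∑ j, ∑ l, (‖d i j l‖ * ‖L (v j)‖) * (K * M ^ k) := by
            refine Finset.sum_le_sum fun j _ => Finset.sum_le_sum fun l _ => ?_
            rw [norm_smul, norm_mul, mul_assoc]
            exact mul_le_mul_of_nonneg_left
              (mul_le_mul_of_nonneg_left (ih l) (norm_nonneg _)) (norm_nonneg _)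
        _ = (∑ j, ∑ l, ‖d i j l‖ * ‖L (v j)‖) * (K * M ^ k) := by
            rw [Finset.sum_mul]
            exact Finset.sum_congr rfl fun j _ => by rw [Finset.sum_mul]
        _ ≤ M * (K * M ^ k) := by
            refine mul_le_mul_of_nonneg_right ?_ (by positivity)
            rw [hM]
            have h1 : ∑ j, ∑ l, ‖d i j l‖ * ‖L (v j)‖
                ≤ ∑ i', ∑ j, ∑ l, ‖d i' j l‖ * ‖L (v j)‖ :=
              Finset.single_le_sum (f := fun i' => ∑ j, ∑ l, ‖d i' j l‖ * ‖L (v j)‖)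
                (fun _ _ => by positivity) (Finset.mem_univ i)
            linarith
        _ = K * M ^ (k + 1) := by ring
  rw [Submodule.mem_span_range_iff_exists_fun] at hx
  obtain ⟨a, ha⟩ := hx
  refine ⟨(∑ i, ‖a i‖) * K, M, by positivity, le_of_lt hM0, fun k => ?_⟩
  rw [← ha, map_sum]
  calc ‖∑ i, cpow L k (a i • v i)‖ ≤ ∑ i, ‖a i‖ * ‖cpow L k (v i)‖ := by
        refine (norm_sum_le _ _).trans (Finset.sum_le_sum fun i _ => ?_)
        rw [map_smul, norm_smul]
    _ ≤ ∑ i, ‖a i‖ * (K * M ^ k) :=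
        Finset.sum_le_sum fun i _ =>
          mul_le_mul_of_nonneg_left (key k i) (norm_nonneg _)
    _ = (∑ i, ‖a i‖) * K * M ^ k := by rw [← Finset.sum_mul]; ring

lemma summ_norm (L : A →ₗ[ℂ] ℂ) (z : ℂ) (y : A) :
    Summable (fun N : ℕ => ‖z ^ N / (N.factorial : ℂ) * cpow L N y‖) := by
  obtain ⟨C, M, hC, hM, hb⟩ := cpow_bound L y
  refine Summable.of_nonneg_of_le (fun _ => norm_nonneg _)
    (fun N => ?_) (((Real.summable_pow_div_factorial (‖z‖ * M)).mul_left C))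
  rw [norm_mul, norm_div, norm_pow]
  calc ‖z‖ ^ N / ‖(N.factorial : ℂ)‖ * ‖cpow L N y‖
      ≤ ‖z‖ ^ N / (N.factorial : ℝ) * (C * M ^ N) := by
        rw [Complex.norm_natCast]
        exact mul_le_mul_of_nonneg_left (hb N) (by positivity)
    _ = C * ((‖z‖ * M) ^ N / (N.factorial : ℝ)) := by rw [mul_pow]; ring

lemma summ (L : A →ₗ[ℂ] ℂ) (z : ℂ) (y : A) :
    Summable (fun N : ℕ => z ^ N / (N.factorial : ℂ) * cpow L N y) :=
  (summ_norm L z y).of_norm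

end Pow

/-! ### Bialgebra-specific structure maps -/

section Bi
variable {B' : Type} [Ring B'] [Bialgebra ℂ B']

noncomputable def Pmap : B' ⊗[ℂ] B' →ₗ[ℂ] B' ⊗[ℂ] B' :=
  (Algebra.TensorProduct.includeLeft (R := ℂ) (S := ℂ) (A := B') (B := B')).toLinearMap
    ∘ₗ LinearMap.mul' ℂ B'

noncomputable def Qmap : B' ⊗[ℂ] B' →ₗ[ℂ] B' ⊗[ℂ] B' :=
  (Algebra.TensorProduct.includeRight (R := ℂ) (A := B') (B := B')).toLinearMap
    ∘ₗ LinearMap.mul' ℂ B'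

lemma tttComm_mul (u v : B' ⊗[ℂ] B') :
    LinearMap.mul' ℂ (B' ⊗[ℂ] B')
      (TensorProduct.map Pmap Qmap
        ((TensorProduct.tensorTensorTensorComm ℂ B' B' B' B') (u ⊗ₜ[ℂ] v))) = u * v := by
  induction u using TensorProduct.induction_on with
  | zero => simp [zero_tmul]
  | add u₁ u₂ h₁ h₂ => simp only [add_tmul, map_add, h₁, h₂, add_mul]
  | tmul a₁ a₂ =>
    induction v using TensorProduct.induction_on with
    | zero => simp [tmul_zero]
    | add v₁ v₂ h₁ h₂ => simp only [tmul_add, map_add, h₁, h₂, mul_add]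
    | tmul b₁ b₂ =>
      rw [TensorProduct.tensorTensorTensorComm_tmul, TensorProduct.map_tmul,
        LinearMap.mul'_apply]
      show (Algebra.TensorProduct.includeLeft (R := ℂ) (S := ℂ)) (a₁ * b₁) *
        (Algebra.TensorProduct.includeRight (R := ℂ)) (a₂ * b₂) = _
      rw [Algebra.TensorProduct.includeLeft_apply, Algebra.TensorProduct.includeRight_apply,
        Algebra.TensorProduct.tmul_mul_tmul, one_mul, mul_one,
        Algebra.TensorProduct.tmul_mul_tmul]

lemma comul_comp_mul' :
    (comul (R := ℂ)) ∘ₗ LinearMap.mul' ℂ B' = cv Pmap Qmap := by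
  refine TensorProduct.ext' fun a b => ?_
  have hR : cv Pmap Qmap (a ⊗ₜ[ℂ] b)
      = LinearMap.mul' ℂ (B' ⊗[ℂ] B') (TensorProduct.map Pmap Qmap
          ((TensorProduct.tensorTensorTensorComm ℂ B' B' B' B')
            (comul (R := ℂ) a ⊗ₜ[ℂ] comul (R := ℂ) b))) := rfl
  rw [hR, tttComm_mul, LinearMap.comp_apply, LinearMap.mul'_apply, Bialgebra.comul_mul]

lemma map_comp_comul (f g : B' ⊗[ℂ] B' →ₗ[ℂ] B') :
    TensorProduct.map f g ∘ₗ (comul (R := ℂ) (A := B' ⊗[ℂ] B'))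
      = cv ((Algebra.TensorProduct.includeLeft (R := ℂ) (S := ℂ)).toLinearMap ∘ₗ f)
           ((Algebra.TensorProduct.includeRight (R := ℂ)).toLinearMap ∘ₗ g) := by
  refine LinearMap.ext fun x => ?_
  rw [LinearMap.comp_apply, cv_repr _ _ (ℛ ℂ x), ← (ℛ ℂ x).eq, map_sum]
  refine Finset.sum_congr rfl fun i _ => ?_
  rw [TensorProduct.map_tmul]
  simp only [LinearMap.comp_apply, AlgHom.toLinearMap_apply,
    Algebra.TensorProduct.includeLeft_apply, Algebra.TensorProduct.includeRight_apply,
    Algebra.TensorProduct.tmul_mul_tmul, one_mul, mul_one]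

lemma alghom_comp_linearMap {T T' : Type} [Ring T] [Algebra ℂ T] [Ring T'] [Algebra ℂ T']
    (h : T →ₐ[ℂ] T') : h.toLinearMap ∘ₗ Algebra.linearMap ℂ T = Algebra.linearMap ℂ T' :=
  LinearMap.ext fun c => h.commutes c

lemma emb_cv {A : Type} [AddCommGroup A] [Module ℂ A] [Coalgebra ℂ A]
    {T : Type} [Ring T] [Algebra ℂ T] (φ ψ : A →ₗ[ℂ] ℂ) :
    Algebra.linearMap ℂ T ∘ₗ cv φ ψ
      = cv (Algebra.linearMap ℂ T ∘ₗ φ) (Algebra.linearMap ℂ T ∘ₗ ψ) := by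
  have h := alghom_cv (Algebra.ofId ℂ T) φ ψ
  have he : (Algebra.ofId ℂ T).toLinearMap = Algebra.linearMap ℂ T :=
    LinearMap.ext fun c => by simp [Algebra.ofId_apply]
  rwa [he] at h

lemma comm_n (L : B' ⊗[ℂ] B' →ₗ[ℂ] ℂ)
    (hc : cv (Algebra.linearMap ℂ B' ∘ₗ L) (LinearMap.mul' ℂ B')
        = cv (LinearMap.mul' ℂ B') (Algebra.linearMap ℂ B' ∘ₗ L)) (n : ℕ) :
    cv (Algebra.linearMap ℂ (B' ⊗[ℂ] B') ∘ₗ cpow L n) Qmap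
      = cv Qmap (Algebra.linearMap ℂ (B' ⊗[ℂ] B') ∘ₗ cpow L n) := by
  have hL1 : cv (Algebra.linearMap ℂ (B' ⊗[ℂ] B') ∘ₗ L) Qmap
      = cv Qmap (Algebra.linearMap ℂ (B' ⊗[ℂ] B') ∘ₗ L) := by
    have h2 := congrArg (fun (f : B' ⊗[ℂ] B' →ₗ[ℂ] B') =>
      (Algebra.TensorProduct.includeRight (R := ℂ) (A := B') (B := B')).toLinearMap ∘ₗ f) hc
    simp only [alghom_cv] at h2
    rwa [← LinearMap.comp_assoc, alghom_comp_linearMap] at h2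
  induction n with
  | zero =>
    rw [show cpow L 0 = counit (R := ℂ) from rfl, cv_counit_left, cv_counit_right]
  | succ n ih =>
    rw [show cpow L (n + 1) = cv L (cpow L n) from rfl, emb_cv, cv_assoc, ih, ← cv_assoc,
      hL1, cv_assoc]

set_option maxHeartbeats 1000000 in
lemma key_ab (L : B' ⊗[ℂ] B' →ₗ[ℂ] ℂ)
    (hc : cv (Algebra.linearMap ℂ B' ∘ₗ L) (LinearMap.mul' ℂ B')
        = cv (LinearMap.mul' ℂ B') (Algebra.linearMap ℂ B' ∘ₗ L))
    (a b : ℕ) :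
    comul (R := ℂ) ∘ₗ cv (LinearMap.mul' ℂ B') (Algebra.linearMap ℂ B' ∘ₗ cpow L (a + b))
      = TensorProduct.map
          (cv (LinearMap.mul' ℂ B') (Algebra.linearMap ℂ B' ∘ₗ cpow L a))
          (cv (LinearMap.mul' ℂ B') (Algebra.linearMap ℂ B' ∘ₗ cpow L b)) ∘ₗ comul := by
  have hcomulAlg : (Bialgebra.comulAlgHom ℂ B').toLinearMap = comul (R := ℂ) := rfl
  have hLHS : comul (R := ℂ) ∘ₗ cv (LinearMap.mul' ℂ B') (Algebra.linearMap ℂ B' ∘ₗ cpow L (a + b))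
      = cv (cv Pmap Qmap) (Algebra.linearMap ℂ (B' ⊗[ℂ] B') ∘ₗ cpow L (a + b)) := by
    rw [← hcomulAlg, alghom_cv, hcomulAlg]
    rw [show comul (R := ℂ) ∘ₗ LinearMap.mul' ℂ B' = cv Pmap Qmap from comul_comp_mul']
    rw [← LinearMap.comp_assoc,
      show comul (R := ℂ) ∘ₗ Algebra.linearMap ℂ B' = Algebra.linearMap ℂ (B' ⊗[ℂ] B') from by
        rw [← hcomulAlg]; exact alghom_comp_linearMap _]
  have hP : (Algebra.TensorProduct.includeLeft (R := ℂ) (S := ℂ) (A := B') (B := B')).toLinearMap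
      ∘ₗ cv (LinearMap.mul' ℂ B') (Algebra.linearMap ℂ B' ∘ₗ cpow L a)
      = cv Pmap (Algebra.linearMap ℂ (B' ⊗[ℂ] B') ∘ₗ cpow L a) := by
    rw [alghom_cv, ← LinearMap.comp_assoc, alghom_comp_linearMap]
    rfl
  have hQ : (Algebra.TensorProduct.includeRight (R := ℂ) (A := B') (B := B')).toLinearMap
      ∘ₗ cv (LinearMap.mul' ℂ B') (Algebra.linearMap ℂ B' ∘ₗ cpow L b)
      = cv Qmap (Algebra.linearMap ℂ (B' ⊗[ℂ] B') ∘ₗ cpow L b) := by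
    rw [alghom_cv, ← LinearMap.comp_assoc, alghom_comp_linearMap]
    rfl
  rw [hLHS, map_comp_comul, hP, hQ]
  rw [cpow_add, emb_cv]
  apply cv_mid_comm
  exact (comm_n L hc a).symm

end Bi

/-! ### Endgame helpers -/

lemma convPow_eq (L : B ⊗[ℂ] B →ₗ[ℂ] ℂ) (n : ℕ) :
    convPowWith Lam counit2 L n = cpow L n := by
  induction n with
  | zero => exact TensorProduct.ext' fun a b => by simp [counit2, convPowWith, cpow, mul_comm]
  | succ n ih =>
    show convWith Lam L (convPowWith Lam counit2 L n) = cv L (cpow L n)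
    rw [ih]; rfl

lemma muW_apply (φ : B ⊗[ℂ] B →ₗ[ℂ] ℂ) (x : B ⊗[ℂ] B) {ι : Type*} (r : Coalgebra.Repr ℂ x ι) :
    ((TensorProduct.rid ℂ B).toLinearMap ∘ₗ
        TensorProduct.map (LinearMap.mul' ℂ B) φ ∘ₗ Lam) x
      = ∑ i ∈ r.index, φ (r.right i) • (LinearMap.mul' ℂ B) (r.left i) := by
  rw [LinearMap.comp_apply, LinearMap.comp_apply,
    show Lam (B := B) x = CoalgebraStruct.comul x from rfl, ← r.eq, map_sum, map_sum]
  refine Finset.sum_congr rfl fun i _ => ?_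
  rw [TensorProduct.map_tmul, LinearEquiv.coe_coe, TensorProduct.rid_tmul]

lemma cvmu_apply (ψ : B ⊗[ℂ] B →ₗ[ℂ] ℂ) (x : B ⊗[ℂ] B) {ι : Type*} (r : Coalgebra.Repr ℂ x ι) :
    cv (LinearMap.mul' ℂ B) (Algebra.linearMap ℂ B ∘ₗ ψ) x
      = ∑ i ∈ r.index, ψ (r.right i) • (LinearMap.mul' ℂ B) (r.left i) := by
  rw [cv_repr _ _ r]
  refine Finset.sum_congr rfl fun i _ => ?_
  rw [LinearMap.comp_apply, Algebra.linearMap_apply, ← Algebra.commutes, ← Algebra.smul_def]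

lemma F_apply_sums (F : B ⊗[ℂ] B →ₗ[ℂ] ℂ) {ι κ : Type*} (s1 : Finset ι) (s2 : Finset κ)
    (c : ι → ℂ) (d : κ → ℂ) (u : ι → B) (v : κ → B) :
    F ((∑ j ∈ s1, c j • u j) ⊗ₜ[ℂ] (∑ k ∈ s2, d k • v k))
      = ∑ j ∈ s1, ∑ k ∈ s2, (c j * d k) * F (u j ⊗ₜ[ℂ] v k) := by
  rw [sum_tmul, map_sum]
  refine Finset.sum_congr rfl fun j _ => ?_
  rw [tmul_sum, map_sum]
  refine Finset.sum_congr rfl fun k _ => ?_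
  rw [tmul_smul, ← smul_tmul', map_smul, map_smul, smul_eq_mul, smul_eq_mul]
  ring

lemma binom (t s : ℂ) (N : ℕ) :
    ∑ kl ∈ Finset.HasAntidiagonal.antidiagonal N,
        (t ^ kl.1 / (kl.1.factorial : ℂ)) * (s ^ kl.2 / (kl.2.factorial : ℂ))
      = (t + s) ^ N / (N.factorial : ℂ) := by
  rw [Finset.Nat.sum_antidiagonal_eq_sum_range_succ_mk, add_pow, Finset.sum_div]
  refine Finset.sum_congr rfl fun k hk => ?_
  have hkN : k ≤ N := Nat.lt_succ_iff.mp (Finset.mem_range.mp hk)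
  rw [Nat.cast_choose ℂ hkN]
  have h1 : (k.factorial : ℂ) ≠ 0 := Nat.cast_ne_zero.mpr k.factorial_ne_zero
  have h2 : ((N - k).factorial : ℂ) ≠ 0 := Nat.cast_ne_zero.mpr (N - k).factorial_ne_zero
  have h3 : (N.factorial : ℂ) ≠ 0 := Nat.cast_ne_zero.mpr N.factorial_ne_zero
  field_simp

/-- Let `L` be a normalized commuting Hochschild 2-cocycle on the bialgebra `B`, and let
`μ_t = μ ⋆ e_⋆^{tL}` (for all real `t`), the convolution exponential being encoded as a
family `EL` of linear maps whose values are the pointwise-convergent exponential series.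
Then `Δ : (B, μ_{t+s}) → (B, μ_t) ⊗ (B, μ_s)` is an algebra homomorphism:
`Δ ∘ μ_{t+s} = (μ_t ⊗ μ_s) ∘ (id ⊗ τ ⊗ id) ∘ (Δ ⊗ Δ)` for all `s, t ∈ ℝ`. -/
theorem stmt9 (L : B ⊗[ℂ] B →ₗ[ℂ] ℂ)
    (hnorm : L (1 ⊗ₜ[ℂ] 1) = 0)
    (hcomm : LconvMu L = MuConvL L)
    (hcocycle : ∀ a b c : B,
      counit (R := ℂ) a * L (b ⊗ₜ[ℂ] c) - L ((a * b) ⊗ₜ[ℂ] c)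
        + L (a ⊗ₜ[ℂ] (b * c)) - L (a ⊗ₜ[ℂ] b) * counit (R := ℂ) c = 0)
    (EL : ℝ → (B ⊗[ℂ] B →ₗ[ℂ] ℂ))
    (hEL : ∀ t x, EL t x = ∑' n : ℕ,
      ((t : ℂ) ^ n / n.factorial) * convPowWith Lam counit2 L n x)
    (μt : ℝ → (B ⊗[ℂ] B →ₗ[ℂ] B))
    (hμt : ∀ t, μt t = (TensorProduct.rid ℂ B).toLinearMap ∘ₗ
      TensorProduct.map (LinearMap.mul' ℂ B) (EL t) ∘ₗ Lam) :
    ∀ s t : ℝ,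
      comul (R := ℂ) ∘ₗ μt (t + s)
        = TensorProduct.map (μt t) (μt s) ∘ₗ Lam := by
  intro s t
  have hc : cv (Algebra.linearMap ℂ B ∘ₗ L) (LinearMap.mul' ℂ B)
      = cv (LinearMap.mul' ℂ B) (Algebra.linearMap ℂ B ∘ₗ L) := by
    have h := hcomm
    rw [LconvMu, MuConvL, show (Lam : B ⊗[ℂ] B →ₗ[ℂ] _) = comul (R := ℂ) from rfl,
      cv_scalar_left, cv_scalar_right] at h
    exact h
  have hEL' : ∀ (t' : ℝ) (y : B ⊗[ℂ] B),
      EL t' y = ∑' N : ℕ, ((t' : ℂ) ^ N / (N.factorial : ℂ)) * cpow L N y := by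
    intro t' y
    rw [hEL]
    exact tsum_congr fun N => by rw [convPow_eq]
  refine LinearMap.ext fun x => ?_
  rw [LinearMap.comp_apply, LinearMap.comp_apply, ← sub_eq_zero,
    ← Module.forall_dual_apply_eq_zero_iff ℂ]
  intro F
  rw [map_sub, sub_eq_zero]
  set z1 : ℂ := ((t + s : ℝ) : ℂ) with hz1
  set r := ℛ ℂ x with hrdef
  set r1 : (i : (B ⊗[ℂ] B) × (B ⊗[ℂ] B)) → Coalgebra.Repr ℂ (r.left i) ((B ⊗[ℂ] B) × (B ⊗[ℂ] B)) := fun i => ℛ ℂ (r.left i) with hr1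
  set r2 : (i : (B ⊗[ℂ] B) × (B ⊗[ℂ] B)) → Coalgebra.Repr ℂ (r.right i) ((B ⊗[ℂ] B) × (B ⊗[ℂ] B)) := fun i => ℛ ℂ (r.right i) with hr2
  set Fi : (B ⊗[ℂ] B) × (B ⊗[ℂ] B) → ℂ := fun i => F (comul (R := ℂ) ((LinearMap.mul' ℂ B) (r.left i))) with hFi
  set D : ℕ → ℂ := fun N => ∑ i ∈ r.index, cpow L N (r.right i) * Fi i with hD
  set G : (B ⊗[ℂ] B) × (B ⊗[ℂ] B) → (B ⊗[ℂ] B) × (B ⊗[ℂ] B) → (B ⊗[ℂ] B) × (B ⊗[ℂ] B) → ℂ := fun i j k =>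
    F ((LinearMap.mul' ℂ B) ((r1 i).left j) ⊗ₜ[ℂ] (LinearMap.mul' ℂ B) ((r2 i).left k)) with hG
  -- LHS
  have hL : F (comul (R := ℂ) (μt (t + s) x)) = ∑' N : ℕ, (z1 ^ N / (N.factorial : ℂ)) * D N := by
    rw [hμt, muW_apply _ x r, map_sum, map_sum]
    have e1 : ∀ i ∈ r.index,
        F (comul (R := ℂ) (EL (t + s) (r.right i) • (LinearMap.mul' ℂ B) (r.left i)))
          = ∑' N : ℕ, z1 ^ N / (N.factorial : ℂ) * cpow L N (r.right i) * Fi i := by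
      intro i _
      rw [map_smul, map_smul, smul_eq_mul, hEL' (t + s), ← tsum_mul_right]
    rw [Finset.sum_congr rfl e1,
      ← Summable.tsum_finsetSum (fun i _ => ((summ L z1 (r.right i)).mul_right (Fi i)))]
    refine tsum_congr fun N => ?_
    rw [hD, Finset.mul_sum]
    exact Finset.sum_congr rfl fun i _ => (mul_assoc _ _ _)
  -- RHS
  have hμtl : ∀ i, μt t (r.left i)
      = ∑ j ∈ (r1 i).index, EL t ((r1 i).right j) • (LinearMap.mul' ℂ B) ((r1 i).left j) :=
    fun i => by rw [hμt]; exact muW_apply _ _ (r1 i)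
  have hμsr : ∀ i, μt s (r.right i)
      = ∑ k ∈ (r2 i).index, EL s ((r2 i).right k) • (LinearMap.mul' ℂ B) ((r2 i).left k) :=
    fun i => by rw [hμt]; exact muW_apply _ _ (r2 i)
  have hRx : F (TensorProduct.map (μt t) (μt s) (Lam x))
      = ∑ i ∈ r.index, ∑ j ∈ (r1 i).index, ∑ k ∈ (r2 i).index,
          (EL t ((r1 i).right j) * EL s ((r2 i).right k)) * G i j k := by
    rw [show Lam (B := B) x = CoalgebraStruct.comul x from rfl, ← r.eq, map_sum, map_sum]
    refine Finset.sum_congr rfl fun i _ => ?_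
    rw [TensorProduct.map_tmul, hμtl i, hμsr i, F_apply_sums]
  -- Cauchy product pointwise
  have cauchy : ∀ i ∈ r.index, ∀ j ∈ (r1 i).index, ∀ k ∈ (r2 i).index,
      (EL t ((r1 i).right j) * EL s ((r2 i).right k)) * G i j k
        = ∑' N : ℕ, (∑ kl ∈ Finset.HasAntidiagonal.antidiagonal N,
            ((t : ℂ) ^ kl.1 / (kl.1.factorial : ℂ) * cpow L kl.1 ((r1 i).right j)) *
            ((s : ℂ) ^ kl.2 / (kl.2.factorial : ℂ) * cpow L kl.2 ((r2 i).right k)))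
            * G i j k := by
    intro i _ j _ k _
    rw [hEL' t, hEL' s,
      tsum_mul_tsum_eq_tsum_sum_antidiagonal_of_summable_norm
        (summ_norm L (t : ℂ) ((r1 i).right j)) (summ_norm L (s : ℂ) ((r2 i).right k)),
      ← tsum_mul_right]
  have hsum3 : ∀ i ∈ r.index, ∀ j ∈ (r1 i).index, ∀ k ∈ (r2 i).index,
      Summable (fun N : ℕ => (∑ kl ∈ Finset.HasAntidiagonal.antidiagonal N,
          ((t : ℂ) ^ kl.1 / (kl.1.factorial : ℂ) * cpow L kl.1 ((r1 i).right j)) *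
          ((s : ℂ) ^ kl.2 / (kl.2.factorial : ℂ) * cpow L kl.2 ((r2 i).right k)))
          * G i j k) := by
    intro i _ j _ k _
    exact ((summable_norm_sum_mul_antidiagonal_of_summable_norm
      (summ_norm L (t : ℂ) ((r1 i).right j))
      (summ_norm L (s : ℂ) ((r2 i).right k))).of_norm).mul_right _
  -- swap sums
  have hswap : F (TensorProduct.map (μt t) (μt s) (Lam x))
      = ∑' N : ℕ, ∑ i ∈ r.index, ∑ j ∈ (r1 i).index, ∑ k ∈ (r2 i).index,
          (∑ kl ∈ Finset.HasAntidiagonal.antidiagonal N,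
            ((t : ℂ) ^ kl.1 / (kl.1.factorial : ℂ) * cpow L kl.1 ((r1 i).right j)) *
            ((s : ℂ) ^ kl.2 / (kl.2.factorial : ℂ) * cpow L kl.2 ((r2 i).right k)))
            * G i j k := by
    rw [hRx]
    rw [Finset.sum_congr rfl (fun i hi => Finset.sum_congr rfl (fun j hj =>
      Finset.sum_congr rfl (fun k hk => cauchy i hi j hj k hk)))]
    rw [Finset.sum_congr rfl (fun i hi => Finset.sum_congr rfl (fun j hj =>
      (Summable.tsum_finsetSum (fun k hk => hsum3 i hi j hj k hk)).symm))]
    rw [Finset.sum_congr rfl (fun i hi =>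
      (Summable.tsum_finsetSum (fun j hj => summable_sum (fun k hk => hsum3 i hi j hj k hk))).symm)]
    rw [← Summable.tsum_finsetSum (fun i hi =>
      summable_sum (fun j hj => summable_sum (fun k hk => hsum3 i hi j hj k hk)))]
  -- the finite-level identity
  have hDab : ∀ a b : ℕ,
      ∑ i ∈ r.index, ∑ j ∈ (r1 i).index, ∑ k ∈ (r2 i).index,
        (cpow L a ((r1 i).right j) * cpow L b ((r2 i).right k)) * G i j k = D (a + b) := by
    intro a b
    have hstep : ∀ i ∈ r.index,
        ∑ j ∈ (r1 i).index, ∑ k ∈ (r2 i).index,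
          (cpow L a ((r1 i).right j) * cpow L b ((r2 i).right k)) * G i j k
        = F ((cv (LinearMap.mul' ℂ B) (Algebra.linearMap ℂ B ∘ₗ cpow L a)) (r.left i) ⊗ₜ[ℂ]
            (cv (LinearMap.mul' ℂ B) (Algebra.linearMap ℂ B ∘ₗ cpow L b)) (r.right i)) := by
      intro i _
      rw [cvmu_apply _ _ (r1 i), cvmu_apply _ _ (r2 i), F_apply_sums]
    rw [Finset.sum_congr rfl hstep]
    have h2 : ∑ i ∈ r.index,
        F ((cv (LinearMap.mul' ℂ B) (Algebra.linearMap ℂ B ∘ₗ cpow L a)) (r.left i) ⊗ₜ[ℂ]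
           (cv (LinearMap.mul' ℂ B) (Algebra.linearMap ℂ B ∘ₗ cpow L b)) (r.right i))
        = F ((TensorProduct.map
            (cv (LinearMap.mul' ℂ B) (Algebra.linearMap ℂ B ∘ₗ cpow L a))
            (cv (LinearMap.mul' ℂ B) (Algebra.linearMap ℂ B ∘ₗ cpow L b)) ∘ₗ
              comul (R := ℂ)) x) := by
      rw [LinearMap.comp_apply, show comul (R := ℂ) x = CoalgebraStruct.comul x from rfl,
        ← r.eq, map_sum, map_sum]
      exact Finset.sum_congr rfl fun i _ => by rw [TensorProduct.map_tmul]
    rw [h2, ← key_ab L hc a b, LinearMap.comp_apply, cvmu_apply _ _ r, map_sum, map_sum, hD]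
    refine Finset.sum_congr rfl fun i _ => ?_
    rw [map_smul, map_smul, smul_eq_mul]
  -- per-N identification
  have perN : ∀ N : ℕ,
      ∑ i ∈ r.index, ∑ j ∈ (r1 i).index, ∑ k ∈ (r2 i).index,
        (∑ kl ∈ Finset.HasAntidiagonal.antidiagonal N,
          ((t : ℂ) ^ kl.1 / (kl.1.factorial : ℂ) * cpow L kl.1 ((r1 i).right j)) *
          ((s : ℂ) ^ kl.2 / (kl.2.factorial : ℂ) * cpow L kl.2 ((r2 i).right k)))
          * G i j k
      = z1 ^ N / (N.factorial : ℂ) * D N := by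
    intro N
    have hA : ∀ i ∈ r.index, ∀ j ∈ (r1 i).index, ∀ k ∈ (r2 i).index,
        (∑ kl ∈ Finset.HasAntidiagonal.antidiagonal N,
          ((t : ℂ) ^ kl.1 / (kl.1.factorial : ℂ) * cpow L kl.1 ((r1 i).right j)) *
          ((s : ℂ) ^ kl.2 / (kl.2.factorial : ℂ) * cpow L kl.2 ((r2 i).right k)))
          * G i j k
        = ∑ kl ∈ Finset.HasAntidiagonal.antidiagonal N,
            ((t : ℂ) ^ kl.1 / (kl.1.factorial : ℂ)) * ((s : ℂ) ^ kl.2 / (kl.2.factorial : ℂ)) *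
            ((cpow L kl.1 ((r1 i).right j) * cpow L kl.2 ((r2 i).right k)) * G i j k) := by
      intro i _ j _ k _
      rw [Finset.sum_mul]
      exact Finset.sum_congr rfl fun kl _ => by ring
    rw [Finset.sum_congr rfl (fun i hi => Finset.sum_congr rfl (fun j hj =>
      Finset.sum_congr rfl (fun k hk => hA i hi j hj k hk)))]
    rw [Finset.sum_congr rfl (fun i _ => Finset.sum_congr rfl (fun j _ =>
      Finset.sum_comm))]
    rw [Finset.sum_congr rfl (fun i _ => Finset.sum_comm)]
    rw [Finset.sum_comm]
    have hB : ∀ kl ∈ Finset.HasAntidiagonal.antidiagonal N,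
        ∑ i ∈ r.index, ∑ j ∈ (r1 i).index, ∑ k ∈ (r2 i).index,
          ((t : ℂ) ^ kl.1 / (kl.1.factorial : ℂ)) * ((s : ℂ) ^ kl.2 / (kl.2.factorial : ℂ)) *
          ((cpow L kl.1 ((r1 i).right j) * cpow L kl.2 ((r2 i).right k)) * G i j k)
        = ((t : ℂ) ^ kl.1 / (kl.1.factorial : ℂ)) * ((s : ℂ) ^ kl.2 / (kl.2.factorial : ℂ))
            * D N := by
      intro kl hkl
      have : ∑ i ∈ r.index, ∑ j ∈ (r1 i).index, ∑ k ∈ (r2 i).index,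
          ((t : ℂ) ^ kl.1 / (kl.1.factorial : ℂ)) * ((s : ℂ) ^ kl.2 / (kl.2.factorial : ℂ)) *
          ((cpow L kl.1 ((r1 i).right j) * cpow L kl.2 ((r2 i).right k)) * G i j k)
          = ((t : ℂ) ^ kl.1 / (kl.1.factorial : ℂ)) * ((s : ℂ) ^ kl.2 / (kl.2.factorial : ℂ)) *
            (∑ i ∈ r.index, ∑ j ∈ (r1 i).index, ∑ k ∈ (r2 i).index,
              (cpow L kl.1 ((r1 i).right j) * cpow L kl.2 ((r2 i).right k)) * G i j k) := by
        rw [Finset.mul_sum]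
        refine Finset.sum_congr rfl fun i _ => ?_
        rw [Finset.mul_sum]
        refine Finset.sum_congr rfl fun j _ => ?_
        rw [Finset.mul_sum]
      rw [this, hDab kl.1 kl.2, Finset.HasAntidiagonal.mem_antidiagonal.mp hkl]
    rw [Finset.sum_congr rfl hB, ← Finset.sum_mul, binom]
    congr 1
    rw [hz1, Complex.ofReal_add]
  rw [hL, hswap]
  exact tsum_congr fun N => (perN N).symm
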